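/- Let F, G : ℝ⁴ → ℝ be smooth functions of (w, z, x, y), and let Q = ∂_w∂_x + ∂_z∂_y − F_y∂_x² − G_x∂_y² + (F_x + G_y)∂_x∂_y. Consider ℝ⁵ with coordinates (w, z, x, y, λ) and the vector fields X₁ = ∂_w − F_y∂_x + (G_y + λ)∂_y + Q(F)∂_λ and X₂ = ∂_z + (F_x − λ)∂_x − G_x∂_y − Q(G)∂_λ. Then X₁ and X₂ commute identically on ℝ⁵ if and only if (F, G) satisfies the system (sd_3rd): ∂_x(Q(F)) − ∂_y(Q(G)) = 0 and (∂_w − F_y∂_x + G_y∂_y)Q(G) + (∂_z + F_x∂_x − G_x∂_y)Q(F) = 0. -/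

import Mathlib

noncomputable section

/-- Partial derivative of `f` along the `i`-th coordinate direction on `ℝⁿ`.
Coordinates on `ℝ⁴` are `(w, z, x, y) = (0, 1, 2, 3)`; on `ℝ⁵` they are
`(w, z, x, y, λ) = (0, 1, 2, 3, 4)`. -/
def pd {n : ℕ} (i : Fin n) (f : (Fin n → ℝ) → ℝ) : (Fin n → ℝ) → ℝ :=
  fun x => fderiv ℝ f x (Pi.single i 1)

/-- Lie bracket of vector fields on `ℝⁿ`:
`[X,Y](p) = (DY)(p)(X(p)) − (DX)(p)(Y(p))`. -/
def lieBr {n : ℕ} (X Y : (Fin n → ℝ) → (Fin n → ℝ)) :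
    (Fin n → ℝ) → (Fin n → ℝ) :=
  fun p => fderiv ℝ Y p (X p) - fderiv ℝ X p (Y p)

/-- Projection `(w, z, x, y, λ) ↦ (w, z, x, y)`. -/
def π4 (s : Fin 5 → ℝ) : Fin 4 → ℝ := ![s 0, s 1, s 2, s 3]

/-- The operator `Q = ∂_w∂_x + ∂_z∂_y − F_y∂_x² − G_x∂_y² + (F_x + G_y)∂_x∂_y`
applied to `h`. -/
def Qop (F G h : (Fin 4 → ℝ) → ℝ) : (Fin 4 → ℝ) → ℝ :=
  fun x =>
    pd 0 (pd 2 h) x + pd 1 (pd 3 h) x - pd 3 F x * pd 2 (pd 2 h) x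
      - pd 2 G x * pd 3 (pd 3 h) x + (pd 2 F x + pd 3 G x) * pd 2 (pd 3 h) x

/-- First equation of system (sd_3rd): `∂_x(Q(F)) − ∂_y(Q(G)) = 0`. -/
def sd3rd1 (F G : (Fin 4 → ℝ) → ℝ) : Prop :=
  ∀ x : Fin 4 → ℝ, pd 2 (Qop F G F) x - pd 3 (Qop F G G) x = 0

/-- Second equation of system (sd_3rd):
`(∂_w − F_y∂_x + G_y∂_y)Q(G) + (∂_z + F_x∂_x − G_x∂_y)Q(F) = 0`. -/
def sd3rd2 (F G : (Fin 4 → ℝ) → ℝ) : Prop :=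
  ∀ x : Fin 4 → ℝ,
    (pd 0 (Qop F G G) x - pd 3 F x * pd 2 (Qop F G G) x
        + pd 3 G x * pd 3 (Qop F G G) x)
      + (pd 1 (Qop F G F) x + pd 2 F x * pd 2 (Qop F G F) x
        - pd 2 G x * pd 3 (Qop F G F) x) = 0

/-- `X₁ = ∂_w − F_y∂_x + (G_y + λ)∂_y + Q(F)∂_λ`. -/
def asdLax1 (F G : (Fin 4 → ℝ) → ℝ) : (Fin 5 → ℝ) → (Fin 5 → ℝ) :=
  fun s => ![1, 0, -(pd 3 F (π4 s)), pd 3 G (π4 s) + s 4, Qop F G F (π4 s)]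

/-- `X₂ = ∂_z + (F_x − λ)∂_x − G_x∂_y − Q(G)∂_λ`. -/
def asdLax2 (F G : (Fin 4 → ℝ) → ℝ) : (Fin 5 → ℝ) → (Fin 5 → ℝ) :=
  fun s => ![0, 1, pd 2 F (π4 s) - s 4, -(pd 2 G (π4 s)), -(Qop F G G (π4 s))]

lemma contDiff_pd {n : ℕ} (i : Fin n) {f : (Fin n → ℝ) → ℝ}
    (hf : ContDiff ℝ (⊤ : ℕ∞) f) : ContDiff ℝ (⊤ : ℕ∞) (pd i f) :=
  (hf.fderiv_right (m := (⊤ : ℕ∞)) (by exact_mod_cast le_top)).clm_apply contDiff_const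

lemma pd_comm {n : ℕ} {f : (Fin n → ℝ) → ℝ} (hf : ContDiff ℝ (⊤ : ℕ∞) f)
    (i j : Fin n) (a : Fin n → ℝ) : pd i (pd j f) a = pd j (pd i f) a := by
  have hd : ∀ y, HasFDerivAt f (fderiv ℝ f y) y := fun y =>
    (hf.differentiable (by simp) y).hasFDerivAt
  have hd2 : Differentiable ℝ (fderiv ℝ f) :=
    (hf.fderiv_right (m := (⊤ : ℕ∞)) (by exact_mod_cast le_top)).differentiable
      (by simp)
  have h2 : HasFDerivAt (fderiv ℝ f) (fderiv ℝ (fderiv ℝ f) a) a := (hd2 a).hasFDerivAt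
  have hsymm := second_derivative_symmetric hd h2 (Pi.single i 1) (Pi.single j 1)
  have e : ∀ v w : Fin n → ℝ, fderiv ℝ (fun x => fderiv ℝ f x v) a w
      = fderiv ℝ (fderiv ℝ f) a w v := by
    intro v w
    rw [fderiv_clm_apply (hd2 a) (differentiableAt_const v)]
    simp
  show fderiv ℝ (fun x => fderiv ℝ f x (Pi.single j 1)) a (Pi.single i 1)
      = fderiv ℝ (fun x => fderiv ℝ f x (Pi.single i 1)) a (Pi.single j 1)
  rw [e, e]
  exact hsymm

lemma contDiff_Qop {F G h : (Fin 4 → ℝ) → ℝ} (hF : ContDiff ℝ (⊤ : ℕ∞) F)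
    (hG : ContDiff ℝ (⊤ : ℕ∞) G) (hh : ContDiff ℝ (⊤ : ℕ∞) h) :
    ContDiff ℝ (⊤ : ℕ∞) (Qop F G h) := by
  unfold Qop
  exact ((((contDiff_pd 0 (contDiff_pd 2 hh)).add (contDiff_pd 1 (contDiff_pd 3 hh))).sub
    ((contDiff_pd 3 hF).mul (contDiff_pd 2 (contDiff_pd 2 hh)))).sub
    ((contDiff_pd 2 hG).mul (contDiff_pd 3 (contDiff_pd 3 hh)))).add
    (((contDiff_pd 2 hF).add (contDiff_pd 3 hG)).mul (contDiff_pd 2 (contDiff_pd 3 hh)))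

lemma fderiv_expand {n : ℕ} {h : (Fin n → ℝ) → ℝ} {a : Fin n → ℝ}
    (_hh : DifferentiableAt ℝ h a) (u : Fin n → ℝ) :
    fderiv ℝ h a u = ∑ i, u i * pd i h a := by
  conv_lhs => rw [← Finset.univ_sum_single u, map_sum]
  refine Finset.sum_congr rfl fun i _ => ?_
  have : Pi.single i (u i) = u i • (Pi.single i 1 : Fin n → ℝ) := by
    funext j
    by_cases hj : j = i <;> simp [Pi.single_apply, hj]
  rw [this, map_smul]
  simp [pd]

def L45 : (Fin 5 → ℝ) →L[ℝ] (Fin 4 → ℝ) :=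
  ContinuousLinearMap.pi fun i : Fin 4 => ContinuousLinearMap.proj i.castSucc

lemma π4_eq (s : Fin 5 → ℝ) : π4 s = L45 s := by
  funext i; fin_cases i <;> rfl

lemma hasFD_pi4comp {h : (Fin 4 → ℝ) → ℝ} (hh : ContDiff ℝ (⊤ : ℕ∞) h) (s : Fin 5 → ℝ) :
    HasFDerivAt (fun s => h (π4 s)) ((fderiv ℝ h (π4 s)).comp L45) s := by
  have hfun : π4 = fun s => L45 s := funext π4_eq
  have h2 : HasFDerivAt π4 L45 s := by rw [hfun]; exact L45.hasFDerivAt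
  exact ((hh.differentiable (by simp) (π4 s)).hasFDerivAt).comp s h2

lemma diffAt_pi4comp {h : (Fin 4 → ℝ) → ℝ} (hh : ContDiff ℝ (⊤ : ℕ∞) h) (s : Fin 5 → ℝ) :
    DifferentiableAt ℝ (fun s => h (π4 s)) s := (hasFD_pi4comp hh s).differentiableAt

lemma fderiv_pi4comp_apply {h : (Fin 4 → ℝ) → ℝ} (hh : ContDiff ℝ (⊤ : ℕ∞) h)
    (s v : Fin 5 → ℝ) :
    fderiv ℝ (fun s => h (π4 s)) s v =
      v 0 * pd 0 h (π4 s) + v 1 * pd 1 h (π4 s) + v 2 * pd 2 h (π4 s)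
        + v 3 * pd 3 h (π4 s) := by
  rw [(hasFD_pi4comp hh s).fderiv]
  have e1 : (fderiv ℝ h (π4 s)).comp L45 v = fderiv ℝ h (π4 s) (π4 v) := by
    rw [π4_eq v]; rfl
  rw [e1, fderiv_expand (hh.differentiable (by simp) (π4 s)) (π4 v),
    Fin.sum_univ_four]
  simp [π4]

lemma diffAt_proj4 (s : Fin 5 → ℝ) : DifferentiableAt ℝ (fun t : Fin 5 → ℝ => t 4) s :=
  (ContinuousLinearMap.proj (R := ℝ) (φ := fun _ : Fin 5 => ℝ) 4).differentiableAt

lemma fderiv_proj4 (s v : Fin 5 → ℝ) : fderiv ℝ (fun t : Fin 5 → ℝ => t 4) s v = v 4 := by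
  have e : (fun t : Fin 5 → ℝ => t 4)
      = ⇑(ContinuousLinearMap.proj (R := ℝ) (φ := fun _ : Fin 5 => ℝ) 4) := rfl
  rw [e, ContinuousLinearMap.fderiv]
  rfl

lemma fderiv_comp_proj {m : ℕ} {Y : (Fin m → ℝ) → (Fin m → ℝ)} {s : Fin m → ℝ}
    (hY : DifferentiableAt ℝ Y s) (v : Fin m → ℝ) (i : Fin m) :
    fderiv ℝ Y s v i = fderiv ℝ (fun s => Y s i) s v := by
  have h1 : HasFDerivAt (fun s => Y s i)
      ((ContinuousLinearMap.proj (R := ℝ) (φ := fun _ : Fin m => ℝ) i).comp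
        (fderiv ℝ Y s)) s :=
    ((ContinuousLinearMap.proj (R := ℝ) (φ := fun _ : Fin m => ℝ) i).hasFDerivAt).comp s hY.hasFDerivAt
  rw [h1.fderiv]
  rfl

lemma diffAt_asdLax1 {F G : (Fin 4 → ℝ) → ℝ} (hF : ContDiff ℝ (⊤ : ℕ∞) F)
    (hG : ContDiff ℝ (⊤ : ℕ∞) G) (s : Fin 5 → ℝ) :
    DifferentiableAt ℝ (asdLax1 F G) s := by
  apply differentiableAt_pi.2
  intro i
  fin_cases i
  · exact (differentiableAt_const (1:ℝ) : DifferentiableAt ℝ (fun _ : Fin 5 → ℝ => (1:ℝ)) s)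
  · exact (differentiableAt_const (0:ℝ) : DifferentiableAt ℝ (fun _ : Fin 5 → ℝ => (0:ℝ)) s)
  · exact (diffAt_pi4comp (contDiff_pd 3 hF) s).neg
  · exact (diffAt_pi4comp (contDiff_pd 3 hG) s).add (diffAt_proj4 s)
  · exact diffAt_pi4comp (contDiff_Qop hF hG hF) s

lemma diffAt_asdLax2 {F G : (Fin 4 → ℝ) → ℝ} (hF : ContDiff ℝ (⊤ : ℕ∞) F)
    (hG : ContDiff ℝ (⊤ : ℕ∞) G) (s : Fin 5 → ℝ) :
    DifferentiableAt ℝ (asdLax2 F G) s := by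
  apply differentiableAt_pi.2
  intro i
  fin_cases i
  · exact (differentiableAt_const (0:ℝ) : DifferentiableAt ℝ (fun _ : Fin 5 → ℝ => (0:ℝ)) s)
  · exact (differentiableAt_const (1:ℝ) : DifferentiableAt ℝ (fun _ : Fin 5 → ℝ => (1:ℝ)) s)
  · exact (diffAt_pi4comp (contDiff_pd 2 hF) s).sub (diffAt_proj4 s)
  · exact (diffAt_pi4comp (contDiff_pd 2 hG) s).neg
  · exact (diffAt_pi4comp (contDiff_Qop hF hG hG) s).neg

lemma lieBr_eval (F G : (Fin 4 → ℝ) → ℝ) (hF : ContDiff ℝ (⊤ : ℕ∞) F)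
    (hG : ContDiff ℝ (⊤ : ℕ∞) G) (s : Fin 5 → ℝ) :
    lieBr (asdLax1 F G) (asdLax2 F G) s =
      ![0, 0, 0, 0,
        s 4 * (pd 2 (Qop F G F) (π4 s) - pd 3 (Qop F G G) (π4 s))
          - ((pd 0 (Qop F G G) (π4 s) - pd 3 F (π4 s) * pd 2 (Qop F G G) (π4 s)
              + pd 3 G (π4 s) * pd 3 (Qop F G G) (π4 s))
            + (pd 1 (Qop F G F) (π4 s) + pd 2 F (π4 s) * pd 2 (Qop F G F) (π4 s)
              - pd 2 G (π4 s) * pd 3 (Qop F G F) (π4 s)))] := by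
  have d1 : DifferentiableAt ℝ (asdLax1 F G) s := diffAt_asdLax1 hF hG s
  have d2 : DifferentiableAt ℝ (asdLax2 F G) s := diffAt_asdLax2 hF hG s
  have hv1 : ∀ j : Fin 5, asdLax1 F G s j =
      ![1, 0, -(pd 3 F (π4 s)), pd 3 G (π4 s) + s 4, Qop F G F (π4 s)] j := fun _ => rfl
  have hv2 : ∀ j : Fin 5, asdLax2 F G s j =
      ![0, 1, pd 2 F (π4 s) - s 4, -(pd 2 G (π4 s)), -(Qop F G G (π4 s))] j := fun _ => rfl
  funext i
  have hsub : lieBr (asdLax1 F G) (asdLax2 F G) s i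
      = fderiv ℝ (fun t => asdLax2 F G t i) s (asdLax1 F G s)
        - fderiv ℝ (fun t => asdLax1 F G t i) s (asdLax2 F G s) := by
    simp only [lieBr, Pi.sub_apply]
    rw [fderiv_comp_proj d2 (asdLax1 F G s) i, fderiv_comp_proj d1 (asdLax2 F G s) i]
  rw [hsub]
  fin_cases i
  · show fderiv ℝ (fun _ : Fin 5 → ℝ => (0:ℝ)) s (asdLax1 F G s)
        - fderiv ℝ (fun _ : Fin 5 → ℝ => (1:ℝ)) s (asdLax2 F G s) = 0
    simp [fderiv_const]
  · show fderiv ℝ (fun _ : Fin 5 → ℝ => (1:ℝ)) s (asdLax1 F G s)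
        - fderiv ℝ (fun _ : Fin 5 → ℝ => (0:ℝ)) s (asdLax2 F G s) = 0
    simp [fderiv_const]
  · show fderiv ℝ (fun t : Fin 5 → ℝ => pd 2 F (π4 t) - t 4) s (asdLax1 F G s)
        - fderiv ℝ (fun t : Fin 5 → ℝ => -(pd 3 F (π4 t))) s (asdLax2 F G s) = 0
    rw [fderiv_fun_sub (diffAt_pi4comp (contDiff_pd 2 hF) s) (diffAt_proj4 s), fderiv_fun_neg]
    simp only [ContinuousLinearMap.coe_sub', Pi.sub_apply, ContinuousLinearMap.neg_apply]
    rw [fderiv_pi4comp_apply (contDiff_pd 2 hF) s, fderiv_proj4,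
      fderiv_pi4comp_apply (contDiff_pd 3 hF) s]
    simp only [hv1, hv2, Matrix.cons_val_zero, Matrix.cons_val_one, Matrix.head_cons,
      Matrix.cons_val_two, Matrix.tail_cons, Matrix.cons_val_three, Matrix.cons_val_four]
    simp only [Qop]
    rw [pd_comm hF 3 2 (π4 s)]
    ring
  · show fderiv ℝ (fun t : Fin 5 → ℝ => -(pd 2 G (π4 t))) s (asdLax1 F G s)
        - fderiv ℝ (fun t : Fin 5 → ℝ => pd 3 G (π4 t) + t 4) s (asdLax2 F G s) = 0
    rw [fderiv_fun_add (diffAt_pi4comp (contDiff_pd 3 hG) s) (diffAt_proj4 s), fderiv_fun_neg]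
    simp only [ContinuousLinearMap.coe_add', Pi.add_apply, ContinuousLinearMap.neg_apply]
    rw [fderiv_pi4comp_apply (contDiff_pd 2 hG) s, fderiv_proj4,
      fderiv_pi4comp_apply (contDiff_pd 3 hG) s]
    simp only [hv1, hv2, Matrix.cons_val_zero, Matrix.cons_val_one, Matrix.head_cons,
      Matrix.cons_val_two, Matrix.tail_cons, Matrix.cons_val_three, Matrix.cons_val_four]
    simp only [Qop]
    rw [pd_comm hG 3 2 (π4 s)]
    ring
  · show fderiv ℝ (fun t : Fin 5 → ℝ => -(Qop F G G (π4 t))) s (asdLax1 F G s)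
        - fderiv ℝ (fun t : Fin 5 → ℝ => Qop F G F (π4 t)) s (asdLax2 F G s)
        = s 4 * (pd 2 (Qop F G F) (π4 s) - pd 3 (Qop F G G) (π4 s))
          - ((pd 0 (Qop F G G) (π4 s) - pd 3 F (π4 s) * pd 2 (Qop F G G) (π4 s)
              + pd 3 G (π4 s) * pd 3 (Qop F G G) (π4 s))
            + (pd 1 (Qop F G F) (π4 s) + pd 2 F (π4 s) * pd 2 (Qop F G F) (π4 s)
              - pd 2 G (π4 s) * pd 3 (Qop F G F) (π4 s)))
    rw [fderiv_fun_neg]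
    simp only [ContinuousLinearMap.neg_apply]
    rw [fderiv_pi4comp_apply (contDiff_Qop hF hG hG) s,
      fderiv_pi4comp_apply (contDiff_Qop hF hG hF) s]
    simp only [hv1, hv2, Matrix.cons_val_zero, Matrix.cons_val_one, Matrix.head_cons,
      Matrix.cons_val_two, Matrix.tail_cons, Matrix.cons_val_three, Matrix.cons_val_four]
    ring

/-- For smooth `F, G`, the Lax fields `X₁, X₂` commute identically on `ℝ⁵` iff
`(F, G)` solves the system (sd_3rd). -/
theorem asd_lax_commute_iff_sd3rd
    (F G : (Fin 4 → ℝ) → ℝ)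
    (hF : ContDiff ℝ (⊤ : ℕ∞) F)
    (hG : ContDiff ℝ (⊤ : ℕ∞) G) :
    (∀ s : Fin 5 → ℝ, lieBr (asdLax1 F G) (asdLax2 F G) s = 0) ↔
      (sd3rd1 F G ∧ sd3rd2 F G) := by
  have hπ : ∀ (x : Fin 4 → ℝ) (t : ℝ), π4 ![x 0, x 1, x 2, x 3, t] = x := by
    intro x t; funext i; fin_cases i <;> rfl
  constructor
  · intro hc
    have key : ∀ (x : Fin 4 → ℝ) (t : ℝ),
        t * (pd 2 (Qop F G F) x - pd 3 (Qop F G G) x)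
          - ((pd 0 (Qop F G G) x - pd 3 F x * pd 2 (Qop F G G) x
              + pd 3 G x * pd 3 (Qop F G G) x)
            + (pd 1 (Qop F G F) x + pd 2 F x * pd 2 (Qop F G F) x
              - pd 2 G x * pd 3 (Qop F G F) x)) = 0 := by
      intro x t
      have h := congrFun ((lieBr_eval F G hF hG ![x 0, x 1, x 2, x 3, t]).symm.trans
        (hc ![x 0, x 1, x 2, x 3, t])) 4
      rw [hπ] at h
      simpa using h
    constructor
    · intro x
      have h0 := key x 0
      have h1 := key x 1
      linarith
    · intro x
      have h0 := key x 0
      linarith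
  · rintro ⟨h1, h2⟩ s
    rw [lieBr_eval F G hF hG s]
    funext i
    fin_cases i
    · rfl
    · rfl
    · rfl
    · rfl
    · show s 4 * (pd 2 (Qop F G F) (π4 s) - pd 3 (Qop F G G) (π4 s))
          - ((pd 0 (Qop F G G) (π4 s) - pd 3 F (π4 s) * pd 2 (Qop F G G) (π4 s)
              + pd 3 G (π4 s) * pd 3 (Qop F G G) (π4 s))
            + (pd 1 (Qop F G F) (π4 s) + pd 2 F (π4 s) * pd 2 (Qop F G F) (π4 s)
              - pd 2 G (π4 s) * pd 3 (Qop F G F) (π4 s))) = 0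
      linear_combination s 4 * h1 (π4 s) - h2 (π4 s)
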